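/- Let G be a compact topological group with normalized Haar probability measure μ, acting on a finite-dimensional real normed vector space E by linear maps with jointly continuous action map. Let K ⊆ E be a compact convex set with g·K ⊆ K, let M ⊆ K be compact and G-invariant (g·y ∈ M for all y ∈ M, g ∈ G), and let f : M → ℝ be continuous, nonnegative, and G-invariant (f(g·y) = f(y)). Define T(x) = ∫_G g·x dμ(g) and f_G(z) = inf { f(y) : y ∈ M, T(y) = z } on T(M). Suppose ψ ∈ M satisfies f(ψ) = f_G(T(ψ)), and suppose the convex roof of f_G at ρ := T(ψ) equals f_G(ρ). Then the convex roof of f is constant on the convex hull of the orbit of ψ: for every σ in the convex hull of { g·ψ : g ∈ G }, f̂(σ) = f(ψ). -/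

import Mathlib

open scoped BigOperators
open MeasureTheory

/-- The convex roof of `f : M → ℝ` over the convex hull of `M`. -/
noncomputable def convexRoof {E : Type*} [NormedAddCommGroup E] [NormedSpace ℝ E]
    (M : Set E) (f : E → ℝ) (x : E) : ℝ :=
  sInf { r : ℝ | ∃ (n : ℕ) (p : Fin n → ℝ) (y : Fin n → E),
    (∀ i, 0 ≤ p i) ∧ (∑ i, p i = 1) ∧ (∀ i, y i ∈ M) ∧
    (∑ i, p i • y i = x) ∧ r = ∑ i, p i * f (y i) }

/-- If `ψ ∈ M` minimizes the `G`-invariant function `f` among preimages of `ρ = T ψ`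
under the twirling operator `T`, and the convex roof of `f_G` at `ρ` equals `f_G(ρ)`,
then the convex roof of `f` is constant, equal to `f(ψ)`, on the convex hull of the
orbit of `ψ`. -/
theorem convexRoof_constant_on_convexHull_orbit
    {G : Type*} [Group G] [TopologicalSpace G] [IsTopologicalGroup G] [CompactSpace G]
    [MeasurableSpace G] [BorelSpace G]
    (μ : Measure G) [μ.IsHaarMeasure] [IsProbabilityMeasure μ]
    {E : Type*} [NormedAddCommGroup E] [NormedSpace ℝ E] [FiniteDimensional ℝ E]
    [MulAction G E] [ContinuousSMul G E]
    (hlin : ∀ g : G, IsLinearMap ℝ (fun x : E => g • x))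
    (K : Set E) (hKcpt : IsCompact K) (hKconv : Convex ℝ K)
    (hKinv : ∀ (g : G), ∀ x ∈ K, g • x ∈ K)
    (M : Set E) (hMcpt : IsCompact M) (hMK : M ⊆ K)
    (hMinv : ∀ (g : G), ∀ y ∈ M, g • y ∈ M)
    (f : E → ℝ) (hfc : ContinuousOn f M) (hf0 : ∀ y ∈ M, 0 ≤ f y)
    (hfinv : ∀ (g : G), ∀ y ∈ M, f (g • y) = f y)
    (T : E → E) (hT : ∀ x, T x = ∫ g, g • x ∂μ)
    (fG : E → ℝ)
    (hfG : ∀ z ∈ T '' M, fG z = sInf { r : ℝ | ∃ y ∈ M, T y = z ∧ r = f y })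
    (ψ : E) (hψ : ψ ∈ M) (hmin : f ψ = fG (T ψ))
    (hroof : convexRoof (T '' M) fG (T ψ) = fG (T ψ)) :
    ∀ σ ∈ convexHull ℝ (MulAction.orbit G ψ), convexRoof M f σ = f ψ := by
  -- Haar measure on a compact group is right invariant
  have hRI : μ.IsMulRightInvariant := by
    constructor
    intro g
    have h1 : IsProbabilityMeasure (μ.map (· * g)) :=
      Measure.isProbabilityMeasure_map (measurable_mul_const g).aemeasurable
    exact Measure.isHaarMeasure_eq_of_isProbabilityMeasure (μ.map (· * g)) μ
  -- integrability of the orbit maps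
  have hint : ∀ x : E, Integrable (fun g : G => g • x) μ := by
    intro x
    have hc : Continuous fun g : G => g • x := continuous_id.smul continuous_const
    rw [← integrableOn_univ]
    exact hc.continuousOn.integrableOn_compact' isCompact_univ MeasurableSet.univ
  -- T is constant on orbits
  have hTg : ∀ (g₀ : G) (x : E), T (g₀ • x) = T x := by
    intro g₀ x
    rw [hT, hT]
    have : ∀ g : G, g • (g₀ • x) = (g * g₀) • x := fun g => (smul_smul g g₀ x)
    simp_rw [this]
    exact integral_mul_right_eq_self (fun g => g • x) g₀
  -- T commutes with convex combinations
  have hTsum : ∀ {n : ℕ} (p : Fin n → ℝ) (y : Fin n → E),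
      T (∑ i, p i • y i) = ∑ i, p i • T (y i) := by
    intro n p y
    have h1 : ∀ g : G, g • (∑ i, p i • y i) = ∑ i, p i • (g • y i) := by
      intro g
      have := (hlin g).mk' _
      calc g • (∑ i, p i • y i) = IsLinearMap.mk' _ (hlin g) (∑ i, p i • y i) := rfl
        _ = ∑ i, p i • (g • y i) := by
            rw [map_sum]
            exact Finset.sum_congr rfl fun i _ => (IsLinearMap.mk' _ (hlin g)).map_smul _ _
    calc T (∑ i, p i • y i) = ∫ g, ∑ i, p i • (g • y i) ∂μ := by
          rw [hT]; exact integral_congr_ae (Filter.Eventually.of_forall h1)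
      _ = ∑ i, ∫ g, p i • (g • y i) ∂μ :=
          integral_finset_sum _ (fun i _ => ((hint (y i)).smul (p i)))
      _ = ∑ i, p i • ∫ g, g • y i ∂μ := by simp_rw [integral_smul]
      _ = ∑ i, p i • T (y i) := by simp_rw [hT]
  -- fG is nonnegative on T '' M
  have hfG0 : ∀ z ∈ T '' M, 0 ≤ fG z := by
    rintro z ⟨y, hy, rfl⟩
    rw [hfG _ ⟨y, hy, rfl⟩]
    refine le_csInf ⟨f y, y, hy, rfl, rfl⟩ ?_
    rintro r ⟨y', hy', -, rfl⟩
    exact hf0 _ hy'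
  -- fG (T y) ≤ f y
  have hfGle : ∀ y ∈ M, fG (T y) ≤ f y := by
    intro y hy
    rw [hfG _ ⟨y, hy, rfl⟩]
    refine csInf_le ⟨0, ?_⟩ ⟨y, hy, rfl, rfl⟩
    rintro r ⟨y', hy', -, rfl⟩
    exact hf0 _ hy'
  -- boundedness below of roof sets
  intro σ hσ
  rw [convexHull_eq] at hσ
  obtain ⟨ι, t, w, z, hw0, hw1, hz, hcm⟩ := hσ
  rw [Finset.centerMass_eq_of_sum_1 _ _ hw1] at hcm
  -- reindex by Fin n
  set n := t.card with hn
  let e : Fin n → t := t.equivFin.symm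
  let p : Fin n → ℝ := fun i => w (e i)
  let y : Fin n → E := fun i => z (e i)
  have hsum : ∀ (F : ι → E), ∑ i, (fun i => F ((e i) : ι)) i = ∑ j ∈ t, F j := by
    intro F
    rw [← Finset.sum_coe_sort t F]
    exact Fintype.sum_equiv t.equivFin.symm _ _ (fun i => rfl)
  have hsumR : ∀ (F : ι → ℝ), ∑ i, F ((e i) : ι) = ∑ j ∈ t, F j := by
    intro F
    rw [← Finset.sum_coe_sort t F]
    exact Fintype.sum_equiv t.equivFin.symm _ _ (fun i => rfl)
  have hp0 : ∀ i, 0 ≤ p i := fun i => hw0 _ (e i).2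
  have hp1 : ∑ i, p i = 1 := by rw [hsumR w]; exact hw1
  have hyorb : ∀ i, y i ∈ MulAction.orbit G ψ := fun i => hz _ (e i).2
  have hyM : ∀ i, y i ∈ M := by
    intro i
    obtain ⟨g, hg⟩ := hyorb i
    rw [← hg]
    exact hMinv g ψ hψ
  have hfy : ∀ i, f (y i) = f ψ := by
    intro i
    obtain ⟨g, hg⟩ := hyorb i
    rw [← hg]
    exact hfinv g ψ hψ
  have hTy : ∀ i, T (y i) = T ψ := by
    intro i
    obtain ⟨g, hg⟩ := hyorb i
    rw [← hg]
    exact hTg g ψ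
  have hσsum : ∑ i, p i • y i = σ := by
    rw [← hcm]
    exact hsum (fun j => w j • z j)
  have hTσ : T σ = T ψ := by
    rw [← hσsum, hTsum p y]
    simp_rw [hTy]
    rw [← Finset.sum_smul, hp1, one_smul]
  -- upper bound
  apply le_antisymm
  · refine csInf_le ?_ ⟨n, p, y, hp0, hp1, hyM, hσsum, ?_⟩
    · refine ⟨0, ?_⟩
      rintro r ⟨m, q, x, hq0, hq1, hxM, -, rfl⟩
      exact Finset.sum_nonneg fun i _ => mul_nonneg (hq0 i) (hf0 _ (hxM i))
    · simp_rw [hfy, ← Finset.sum_mul, hp1, one_mul]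
  · refine le_csInf ⟨∑ i, p i * f (y i), ⟨n, p, y, hp0, hp1, hyM, hσsum, rfl⟩⟩ ?_
    rintro r ⟨m, q, x, hq0, hq1, hxM, hxs, rfl⟩
    have h1 : f ψ ≤ ∑ i, q i * fG (T (x i)) := by
      rw [hmin, ← hroof]
      refine csInf_le ⟨0, ?_⟩ ?_
      · rintro r ⟨m', q', x', hq0', hq1', hxM', -, rfl⟩
        exact Finset.sum_nonneg fun i _ => mul_nonneg (hq0' i) (hfG0 _ (hxM' i))
      · refine ⟨m, q, fun i => T (x i), hq0, hq1, fun i => ⟨x i, hxM i, rfl⟩, ?_, rfl⟩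
        rw [← hTsum q x, hxs, hTσ]
    refine h1.trans (Finset.sum_le_sum fun i _ => ?_)
    exact mul_le_mul_of_nonneg_left (hfGle _ (hxM i)) (hq0 i)
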